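/- For k ≥ 9, 2·k²·k!/⌈4·log₂ k / log₂ log₂ k⌉! ≤ k! · 2^{1 − 2·log₂ k + o(log₂ k)}; in particular 2k²·k!/⌈4 log₂ k/log₂ log₂ k⌉! = o(k!) as k → ∞. -/

import Mathlib

open Asymptotics Filter Real Topology

noncomputable section

lemma log_factorial_le (n : ℕ) : Real.log n.factorial ≤ n * Real.log n := by
  calc Real.log n.factorial ≤ Real.log ((n : ℝ) ^ n) := by
        apply Real.log_le_log (by positivity)
        exact_mod_cast Nat.factorial_le_pow n
    _ = n * Real.log n := Real.log_pow n n

lemma le_log_factorial (n : ℕ) : (n : ℝ) * (Real.log n - 1) ≤ Real.log n.factorial := by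
  rcases Nat.eq_zero_or_pos n with h | h
  · simp [h]
  have hfac : (0 : ℝ) < n.factorial := by positivity
  have h1 : ((n : ℝ)) ^ n / n.factorial ≤ Real.exp n := by
    calc ((n : ℝ)) ^ n / n.factorial
        ≤ ∑ i ∈ Finset.range (n + 1), (n : ℝ) ^ i / i.factorial := by
          exact Finset.single_le_sum (f := fun i => (n : ℝ) ^ i / (i.factorial : ℝ))
            (fun i _ => by positivity) (Finset.self_mem_range_succ n)
      _ ≤ Real.exp n := Real.sum_le_exp_of_nonneg (by positivity) _
  have h2 : ((n : ℝ)) ^ n ≤ Real.exp n * n.factorial := by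
    rw [div_le_iff₀ hfac] at h1; exact h1
  have h3 : Real.log ((n : ℝ) ^ n) ≤ Real.log (Real.exp n * n.factorial) :=
    Real.log_le_log (by positivity) h2
  rw [Real.log_pow, Real.log_mul (Real.exp_ne_zero _) hfac.ne', Real.log_exp] at h3
  nlinarith [h3]

lemma main_tendsto :
    Tendsto (fun y : ℝ => Real.log (⌈4 * y / Real.logb 2 y⌉₊).factorial / y) atTop
      (𝓝 (4 * Real.log 2)) := by
  set R : ℝ → ℕ := fun y => ⌈4 * y / Real.logb 2 y⌉₊ with hRdef
  set a : ℝ → ℝ := fun y => 4 * y * Real.log 2 / Real.log y with hadef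
  have hlog2 : (0 : ℝ) < Real.log 2 := Real.log_pos (by norm_num)
  have hdiv : Tendsto (fun x : ℝ => Real.log x / x) atTop (𝓝 0) :=
    Real.isLittleO_log_id_atTop.tendsto_div_nhds_zero
  have hyl : Tendsto (fun y : ℝ => y / Real.log y) atTop atTop := by
    have h1 : Tendsto (fun t : ℝ => Real.exp t / t) atTop atTop := by
      simpa using Real.tendsto_exp_div_pow_atTop 1
    have h2 := h1.comp Real.tendsto_log_atTop
    apply h2.congr'
    filter_upwards [eventually_gt_atTop (0 : ℝ)] with y hy
    simp [Function.comp, Real.exp_log hy]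
  have ha : Tendsto a atTop atTop := by
    have := hyl.const_mul_atTop (r := 4 * Real.log 2) (by positivity)
    apply this.congr
    intro y; simp only [hadef]; ring
  have haeq : ∀ᶠ y : ℝ in atTop, 4 * y / Real.logb 2 y = a y := by
    filter_upwards [eventually_gt_atTop (1 : ℝ)] with y hy
    have hly : Real.log y ≠ 0 := (Real.log_pos hy).ne'
    rw [Real.logb, hadef]
    field_simp
  have hbounds : ∀ᶠ y : ℝ in atTop, a y ≤ (R y : ℝ) ∧ (R y : ℝ) ≤ a y + 1 := by
    filter_upwards [haeq, ha.eventually_ge_atTop 0] with y hy hay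
    have hye : R y = ⌈a y⌉₊ := by simp only [hRdef]; rw [hy]
    rw [hye]
    exact ⟨Nat.le_ceil _, (Nat.ceil_lt_add_one hay).le⟩
  have h1 : Tendsto (fun y => (R y : ℝ) / a y) atTop (𝓝 1) := by
    have hub1 : Tendsto (fun y => 1 + 1 / a y) atTop (𝓝 1) := by
      have : Tendsto (fun y => (1:ℝ) + (a y)⁻¹) atTop (𝓝 (1 + 0)) :=
        tendsto_const_nhds.add ha.inv_tendsto_atTop
      simpa [one_div] using this
    apply tendsto_of_tendsto_of_tendsto_of_le_of_le' tendsto_const_nhds hub1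
    · filter_upwards [hbounds, ha.eventually_gt_atTop 0] with y hy hay
      exact (one_le_div hay).2 hy.1
    · filter_upwards [hbounds, ha.eventually_gt_atTop 0] with y hy hay
      rw [div_le_iff₀ hay]
      have : 1 / a y * a y = 1 := by field_simp
      nlinarith [hy.2]
  have hloglog : Tendsto (fun y : ℝ => Real.log (Real.log y) / Real.log y) atTop (𝓝 0) :=
    hdiv.comp Real.tendsto_log_atTop
  have hinvlog : Tendsto (fun y : ℝ => 1 / Real.log y) atTop (𝓝 0) := by
    simp only [one_div]; exact (Real.tendsto_log_atTop.inv_tendsto_atTop : Tendsto (fun y => (Real.log y)⁻¹) atTop (𝓝 0))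
  have h2 : Tendsto (fun y => Real.log (R y) / Real.log y) atTop (𝓝 1) := by
    have hRa0 : Tendsto (fun y => Real.log ((R y : ℝ) / a y)) atTop (𝓝 0) := by
      have := (Real.continuousAt_log one_ne_zero).tendsto.comp h1
      simpa [Function.comp_def] using this
    have htarget : Tendsto (fun y => Real.log (4 * Real.log 2) * (1 / Real.log y) + 1
        - Real.log (Real.log y) / Real.log y
        + Real.log ((R y : ℝ) / a y) * (1 / Real.log y)) atTop (𝓝 1) := by
      have h' : Tendsto (fun y : ℝ => Real.log (4 * Real.log 2) * (1 / Real.log y) + 1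
          - Real.log (Real.log y) / Real.log y + Real.log ((R y : ℝ) / a y) * (1 / Real.log y))
          atTop (𝓝 (Real.log (4 * Real.log 2) * 0 + 1 - 0 + 0 * 0)) :=
        (((tendsto_const_nhds.mul hinvlog).add tendsto_const_nhds).sub hloglog).add
          (hRa0.mul hinvlog)
      simpa using h'
    apply htarget.congr'
    filter_upwards [eventually_gt_atTop (Real.exp 1), hbounds, ha.eventually_gt_atTop 0]
      with y hy hb hay
    have hy1 : (1 : ℝ) < y := lt_trans (by nlinarith [Real.exp_one_gt_d9]) hy
    have hly : (0 : ℝ) < Real.log y := Real.log_pos hy1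
    have hR0 : (0 : ℝ) < (R y : ℝ) := lt_of_lt_of_le hay hb.1
    have hRfrac : (0 : ℝ) < (R y : ℝ) / a y := div_pos hR0 hay
    have hlogR : Real.log (R y) = Real.log (a y) + Real.log ((R y : ℝ) / a y) := by
      rw [← Real.log_mul hay.ne' hRfrac.ne']
      congr 1
      field_simp
    have hloga : Real.log (a y) = Real.log (4 * Real.log 2) + Real.log y
        - Real.log (Real.log y) := by
      have hnum : (0 : ℝ) < 4 * Real.log 2 := by positivity
      have : a y = (4 * Real.log 2) * y / Real.log y := by rw [hadef]; ring
      rw [this, Real.log_div (by positivity) hly.ne', Real.log_mul hnum.ne'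
        (by positivity : (y:ℝ) ≠ 0)]
    rw [hlogR, hloga]
    field_simp
  have h3 : Tendsto (fun y => (R y : ℝ) / y) atTop (𝓝 0) := by
    have htarget : Tendsto (fun y => ((R y : ℝ) / a y) * (4 * Real.log 2 * (1 / Real.log y)))
        atTop (𝓝 0) := by
      have h' : Tendsto (fun y => ((R y : ℝ) / a y) * (4 * Real.log 2 * (1 / Real.log y)))
          atTop (𝓝 (1 * (4 * Real.log 2 * 0))) := h1.mul (tendsto_const_nhds.mul hinvlog)
      simpa using h'
    apply htarget.congr'
    filter_upwards [eventually_gt_atTop (1 : ℝ), ha.eventually_gt_atTop 0] with y hy hay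
    have hly : (0 : ℝ) < Real.log y := Real.log_pos hy
    have hy0 : (0 : ℝ) < y := lt_trans one_pos hy
    rw [hadef] at hay ⊢
    field_simp
  have hub : Tendsto (fun y => (R y : ℝ) * Real.log (R y) / y) atTop
      (𝓝 (4 * Real.log 2)) := by
    have htarget : Tendsto (fun y => 4 * Real.log 2 * (((R y : ℝ) / a y)
        * (Real.log (R y) / Real.log y))) atTop (𝓝 (4 * Real.log 2)) := by
      have h' : Tendsto (fun y => 4 * Real.log 2 * (((R y : ℝ) / a y)
          * (Real.log (R y) / Real.log y))) atTop (𝓝 (4 * Real.log 2 * (1 * 1))) :=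
        tendsto_const_nhds.mul (h1.mul h2)
      simpa using h'
    apply htarget.congr'
    filter_upwards [eventually_gt_atTop (1 : ℝ), ha.eventually_gt_atTop 0] with y hy hay
    have hly : (0 : ℝ) < Real.log y := Real.log_pos hy
    have hy0 : (0 : ℝ) < y := lt_trans one_pos hy
    rw [hadef] at hay ⊢
    field_simp
  have hlb : Tendsto (fun y => (R y : ℝ) * Real.log (R y) / y - (R y : ℝ) / y) atTop
      (𝓝 (4 * Real.log 2)) := by
    have := hub.sub h3
    simpa using this
  apply tendsto_of_tendsto_of_tendsto_of_le_of_le' hlb hub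
  · filter_upwards [eventually_gt_atTop (0 : ℝ)] with y hy0
    have := le_log_factorial (R y)
    have h' : ((R y : ℝ) * Real.log (R y) - (R y : ℝ)) / y ≤ Real.log (R y).factorial / y := by
      apply div_le_div_of_nonneg_right _ hy0.le
      · nlinarith [this]
    calc (R y : ℝ) * Real.log (R y) / y - (R y : ℝ) / y
        = ((R y : ℝ) * Real.log (R y) - (R y : ℝ)) / y := by ring
      _ ≤ _ := h'
  · filter_upwards [eventually_gt_atTop (0 : ℝ)] with y hy0
    exact div_le_div_of_nonneg_right (log_factorial_le (R y)) hy0.le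


/-- With `r(k) = ⌈4·log₂ k / log₂ log₂ k⌉`, we have
`2k²·k!/r(k)! ≤ k!·2^(1 - 2 log₂ k + o(log₂ k))`, and in particular
`2k²·k!/r(k)! = o(k!)` as `k → ∞`. -/
theorem stmt18 :
    (∃ ε : ℕ → ℝ, ε =o[Filter.atTop] (fun k : ℕ => Real.logb 2 k) ∧
      ∀ k : ℕ, 9 ≤ k →
        (2 * (k : ℝ) ^ 2 * (k.factorial : ℝ)) /
            ((⌈4 * Real.logb 2 k / Real.logb 2 (Real.logb 2 k)⌉₊.factorial : ℝ))
          ≤ (k.factorial : ℝ) * (2 : ℝ) ^ ((1 : ℝ) - 2 * Real.logb 2 k + ε k)) ∧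
    (fun k : ℕ => (2 * (k : ℝ) ^ 2 * (k.factorial : ℝ)) /
        ((⌈4 * Real.logb 2 k / Real.logb 2 (Real.logb 2 k)⌉₊.factorial : ℝ)))
      =o[Filter.atTop] (fun k : ℕ => (k.factorial : ℝ)) := by
  set L : ℕ → ℝ := fun k => Real.logb 2 k with hLdef
  set r : ℕ → ℕ := fun k => ⌈4 * Real.logb 2 k / Real.logb 2 (Real.logb 2 k)⌉₊ with hrdef
  set ε : ℕ → ℝ := fun k => 4 * L k - Real.logb 2 ((r k).factorial) with hεdef
  have hL : Tendsto L atTop atTop :=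
    (Real.tendsto_logb_atTop (by norm_num : (1:ℝ) < 2)).comp tendsto_natCast_atTop_atTop
  have hlog2 : (0 : ℝ) < Real.log 2 := Real.log_pos (by norm_num)
  have hcomp : Tendsto (fun k => Real.log ((r k).factorial) / L k) atTop
      (𝓝 (4 * Real.log 2)) := main_tendsto.comp hL
  have hLpos : ∀ᶠ k : ℕ in atTop, 0 < L k := hL.eventually_gt_atTop 0
  have hε : Tendsto (fun k => ε k / L k) atTop (𝓝 0) := by
    have htarget : Tendsto (fun k => 4 - (Real.log ((r k).factorial) / L k) / Real.log 2)
        atTop (𝓝 (4 - 4 * Real.log 2 / Real.log 2)) :=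
      tendsto_const_nhds.sub (hcomp.div_const _)
    have h4 : (4 : ℝ) - 4 * Real.log 2 / Real.log 2 = 0 := by field_simp; ring
    rw [h4] at htarget
    apply htarget.congr'
    filter_upwards [hLpos] with k hk
    rw [hεdef]
    simp only [Real.logb]
    field_simp
  have hεo : ε =o[atTop] L := by
    rw [isLittleO_iff_tendsto']
    · exact hε
    · filter_upwards [hLpos] with k hk h0
      exact absurd h0 hk.ne'
  have hid : ∀ k : ℕ, 1 ≤ k →
      (2 : ℝ) ^ ((1 : ℝ) - 2 * L k + ε k) = 2 * (k : ℝ) ^ 2 / ((r k).factorial : ℝ) := by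
    intro k hk
    have hk0 : (0 : ℝ) < (k : ℝ) := by exact_mod_cast hk
    have hfac : (0 : ℝ) < ((r k).factorial : ℝ) := by
      exact_mod_cast (r k).factorial_pos
    have hexp : (1 : ℝ) - 2 * L k + ε k
        = 1 + L k * 2 + (- Real.logb 2 ((r k).factorial)) := by
      rw [hεdef]; ring
    rw [hexp, Real.rpow_add two_pos, Real.rpow_add two_pos, Real.rpow_one,
      Real.rpow_mul (by norm_num : (0:ℝ) ≤ 2), Real.rpow_neg (by norm_num : (0:ℝ) ≤ 2),
      Real.rpow_logb two_pos (by norm_num) hfac, hLdef,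
      Real.rpow_logb two_pos (by norm_num) hk0]
    rw [show ((2:ℝ)) = ((2:ℕ):ℝ) by norm_num, Real.rpow_natCast]
    push_cast
    ring
  refine ⟨⟨ε, hεo, ?_⟩, ?_⟩
  · intro k hk
    rw [hid k (by omega)]
    apply le_of_eq
    ring
  · rw [isLittleO_iff_tendsto']
    · have hexp : Tendsto (fun k => (1 : ℝ) - 2 * L k + ε k) atTop atBot := by
        apply tendsto_atBot_mono' atTop (f₁ := fun k => 1 - L k)
        · have h1 := (hεo.bound one_pos)
          filter_upwards [h1, hLpos] with k hb hk
          have : ε k ≤ L k := by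
            have := le_abs_self (ε k)
            simp only [Real.norm_eq_abs, one_mul] at hb
            rw [abs_of_pos hk] at hb
            linarith
          linarith
        · have : Tendsto (fun k => -L k) atTop atBot := by
            rw [tendsto_neg_atBot_iff]; exact hL
          have h2 := tendsto_atBot_add_const_left atTop (1 : ℝ) this
          apply h2.congr
          intro k; ring
      have hpow : Tendsto (fun k => (2:ℝ) ^ ((1 : ℝ) - 2 * L k + ε k)) atTop (𝓝 0) := by
        have h3 : Tendsto (fun k => ((1 : ℝ) - 2 * L k + ε k) * Real.log 2) atTop atBot :=
          hexp.atBot_mul_const hlog2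
        have h4 := Real.tendsto_exp_atBot.comp h3
        apply h4.congr
        intro k
        rw [Real.rpow_def_of_pos two_pos]
        simp [Function.comp, mul_comm]
      apply hpow.congr'
      filter_upwards [eventually_ge_atTop 1] with k hk
      have hfacne : ((k.factorial : ℝ)) ≠ 0 := by
        exact_mod_cast k.factorial_ne_zero
      rw [hid k hk]
      field_simp
      ring
    · filter_upwards with k h0
      exact absurd h0 (by exact_mod_cast k.factorial_ne_zero)
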